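/- Let G be a finitely generated group with a free abelian normal subgroup A of finite index such that G^{ab} is finite. Then exp(G^{ab}) ≤ exp_•(G) ≤ |G/A|, where exp_•(G) is the generalized exponent of G. -/

import Mathlib

-- torsion-freeness of Multiplicative (Fin k → ℤ)
lemma aux_tf {k N : ℕ} (hN : N ≠ 0) (x : Multiplicative (Fin k → ℤ))
    (hx : x ^ N = 1) : x = 1 := by
  have h : N • (Multiplicative.toAdd x) = 0 := by
    have := congrArg Multiplicative.toAdd hx
    rwa [toAdd_pow, toAdd_one] at this
  have : Multiplicative.toAdd x = 0 := by
    funext i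
    have := congrFun h i
    simp only [Pi.smul_apply, smul_eq_mul, Pi.zero_apply, nsmul_eq_mul] at this ⊢
    exact by
      rcases mul_eq_zero.mp this with h' | h'
      · exact absurd (by exact_mod_cast h') hN
      · exact h'
  have := congrArg Multiplicative.ofAdd this
  simpa using this

-- central elements of A are trivial
lemma aux_central_triv {G : Type*} [Group G] (A : Subgroup G) [A.Normal]
    (hfin : A.index ≠ 0) {k : ℕ} (e : A ≃* Multiplicative (Fin k → ℤ))
    (habfin : Finite (Abelianization G)) (z : G) (hz : z ∈ A)
    (hcentral : ∀ w : G, w * z = z * w) : z = 1 := by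
  haveI : A.FiniteIndex := ⟨hfin⟩
  let ϕ : A →* Multiplicative (Fin k → ℤ) := e.toMonoidHom
  have key : ∀ (n : ℕ) (g₀ : G), g₀⁻¹ * z ^ n * g₀ ∈ A → g₀⁻¹ * z ^ n * g₀ = z ^ n := by
    intro n g₀ _
    have hcz : Commute g₀ z := hcentral g₀
    have hc : g₀ * z ^ n = z ^ n * g₀ := hcz.pow_right n
    rw [mul_assoc, ← hc, ← mul_assoc, inv_mul_cancel, one_mul]
  have htr := MonoidHom.transfer_eq_pow ϕ z key
  -- the transfer map is trivial since Abelianization G is finite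
  set V : G →* Multiplicative (Fin k → ℤ) := MonoidHom.transfer ϕ
  have hV : V z = 1 := by
    have hfact : V = (Abelianization.lift V).comp Abelianization.of := by
      ext g; simp
    have hNe : Nat.card (Abelianization G) ≠ 0 := Nat.card_pos.ne'
    have : (V z) ^ Nat.card (Abelianization G) = 1 := by
      rw [hfact, MonoidHom.comp_apply, ← map_pow, pow_card_eq_one', map_one]
    exact aux_tf hNe _ this
  rw [hV] at htr
  have h1 : (⟨z ^ A.index, _⟩ : A) = 1 := e.injective (by rw [map_one]; exact htr.symm)
  have h2 : z ^ A.index = 1 := congrArg Subtype.val h1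
  have h3 : (⟨z, hz⟩ : A) ^ A.index = 1 := by
    ext; simpa using h2
  have h4 : e ⟨z, hz⟩ = 1 := aux_tf hfin _ (by rw [← map_pow, h3, map_one])
  have := e.injective (by rw [h4, map_one] : e ⟨z, hz⟩ = e 1)
  exact congrArg Subtype.val this

theorem genExponent_bounds {G : Type*} [Group G] [Group.FG G]
    (A : Subgroup G) [A.Normal] (hfin : A.index ≠ 0)
    (hfree : ∃ n : ℕ, Nonempty (A ≃* Multiplicative (Fin n → ℤ)))
    (habfin : Finite (Abelianization G)) :
    -- lower bound: any generalized exponent of `G` is at least `exp(G^{ab})`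
    (∀ e : ℕ, 0 < e →
      (∀ g : G, ∃ xs : List G, xs.length = e ∧
        (xs.map (fun x => x⁻¹ * g * x)).prod = 1) →
      Monoid.exponent (Abelianization G) ≤ e) ∧
    -- upper bound: `|G/A|` is a generalized exponent of `G`
    (∀ g : G, ∃ xs : List G, xs.length = A.index ∧
      (xs.map (fun x => x⁻¹ * g * x)).prod = 1) := by
  classical
  obtain ⟨k, ⟨eqv⟩⟩ := hfree
  constructor
  · -- lower bound
    intro e he hgen
    have h1 : ∀ y : Abelianization G, y ^ e = 1 := by
      intro y
      obtain ⟨g, rfl⟩ : ∃ g, Abelianization.of g = y := by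
        exact Quotient.inductionOn y fun g => ⟨g, rfl⟩
      obtain ⟨xs, hlen, hprod⟩ := hgen g
      have h2 := congrArg Abelianization.of hprod
      rw [map_list_prod, map_one, List.map_map] at h2
      have h3 : xs.map (Abelianization.of ∘ fun x => x⁻¹ * g * x)
          = List.replicate (xs.map (Abelianization.of ∘ fun x => x⁻¹ * g * x)).length
            (Abelianization.of g) := by
        apply List.eq_replicate_of_mem
        intro b hb
        simp only [List.mem_map, Function.comp_apply] at hb
        obtain ⟨x, _, rfl⟩ := hb
        rw [map_mul, map_mul, map_inv, mul_comm, ← mul_assoc, mul_inv_cancel, one_mul]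
      rw [h3, List.prod_replicate, List.length_map, hlen] at h2
      exact h2
    exact Nat.le_of_dvd he (Monoid.exponent_dvd_of_forall_pow_eq_one h1)
  · -- upper bound
    intro g
    haveI : Finite (G ⧸ A) := (Nat.card_ne_zero.mp hfin).2
    letI : Fintype (G ⧸ A) := Fintype.ofFinite _
    have hcommA : ∀ x y : A, x * y = y * x := fun x y =>
      eqv.injective (by rw [map_mul, map_mul, mul_comm])
    letI cgA : CommGroup A := { (inferInstance : Group A) with mul_comm := hcommA }
    set P := G ⧸ A with hP
    set H : Subgroup P := Subgroup.zpowers (QuotientGroup.mk g) with hH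
    letI : Fintype (P ⧸ H) := Fintype.ofFinite _
    letI : Fintype H := Fintype.ofFinite _
    set m := orderOf (QuotientGroup.mk g : P) with hm
    have hmpos : m ≠ 0 := (orderOf_pos _).ne'
    have hgm : g ^ m ∈ A := by
      rw [← QuotientGroup.eq_one_iff, QuotientGroup.mk_pow]
      exact pow_orderOf_eq_one _
    have key : ∀ z : G, z ∈ A → (∀ w : G, w * z = z * w) → z = 1 :=
      fun z hz hc => aux_central_triv A hfin eqv habfin z hz hc
    have congr_conj : ∀ x y : G, (QuotientGroup.mk x : P) = QuotientGroup.mk y →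
        x * g ^ m * x⁻¹ = y * g ^ m * y⁻¹ := by
      intro x y hxy
      obtain ⟨a, ha, hxa⟩ : ∃ a ∈ A, x = y * a := by
        refine ⟨y⁻¹ * x, ?_, by group⟩
        exact (QuotientGroup.eq (s := A)).mp hxy.symm
      have hcomm2 : a * g ^ m = g ^ m * a :=
        congrArg Subtype.val (hcommA ⟨a, ha⟩ ⟨g ^ m, hgm⟩)
      have h5 : a * g ^ m * a⁻¹ = g ^ m := by rw [hcomm2, mul_inv_cancel_right]
      subst hxa
      calc y * a * g ^ m * (y * a)⁻¹ = y * (a * g ^ m * a⁻¹) * y⁻¹ := by group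
        _ = y * g ^ m * y⁻¹ := by rw [h5]
    have conj_eq : ∀ (y : G) (j : ℤ) (x : G),
        (QuotientGroup.mk x : P) = QuotientGroup.mk y * (QuotientGroup.mk g : P) ^ j →
        x * g ^ m * x⁻¹ = y * g ^ m * y⁻¹ := by
      intro y j x hx
      have h1 : (QuotientGroup.mk x : P) = QuotientGroup.mk (y * g ^ j) := by
        rw [QuotientGroup.mk_mul, QuotientGroup.mk_zpow]; exact hx
      rw [congr_conj x (y * g ^ j) h1]
      have hcg : g ^ (j : ℤ) * g ^ m = g ^ m * g ^ (j : ℤ) := by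
        rw [← zpow_natCast g m, ← zpow_add, ← zpow_add, add_comm]
      have h6 : g ^ (j : ℤ) * g ^ m * (g ^ (j : ℤ))⁻¹ = g ^ m := by
        rw [hcg, mul_inv_cancel_right]
      calc y * g ^ j * g ^ m * (y * g ^ j)⁻¹
          = y * (g ^ (j : ℤ) * g ^ m * (g ^ (j : ℤ))⁻¹) * y⁻¹ := by group
        _ = y * g ^ m * y⁻¹ := by rw [h6]
    -- transversal data
    set T : P → G := fun q => Quotient.out q with hTdef
    have hT : ∀ q : P, (QuotientGroup.mk (T q) : P) = q := fun q => QuotientGroup.out_eq' q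
    set u : P ⧸ H → G := fun r => T (Quotient.out r) with hudef
    have hu : ∀ r : P ⧸ H, (QuotientGroup.mk (u r) : P) = Quotient.out r := fun r => hT _
    have hwmem : ∀ x : G, x * g ^ m * x⁻¹ ∈ A := fun x =>
      Subgroup.Normal.conj_mem ‹A.Normal› _ hgm x
    set w : P ⧸ H → A := fun r => ⟨u r * g ^ m * (u r)⁻¹, hwmem _⟩ with hwdef
    set f : P → A := fun q => ⟨T q * g ^ m * (T q)⁻¹, hwmem _⟩ with hfdef
    have hfw : ∀ q : P, f q = w (QuotientGroup.mk q) := by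
      intro q
      set r : P ⧸ H := QuotientGroup.mk q with hr
      have h1 : (QuotientGroup.mk (Quotient.out r) : P ⧸ H) = QuotientGroup.mk q := by
        rw [QuotientGroup.out_eq']
      have h2 : (Quotient.out r)⁻¹ * q ∈ H := (QuotientGroup.eq (s := H)).mp h1
      obtain ⟨j, hj⟩ := Subgroup.mem_zpowers_iff.mp h2
      have h3 : q = Quotient.out r * (QuotientGroup.mk g : P) ^ j := by
        rw [hj, mul_inv_cancel_left]
      have h4 : (QuotientGroup.mk (T q) : P)
          = QuotientGroup.mk (u r) * (QuotientGroup.mk g : P) ^ j := by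
        rw [hT, hu]; exact h3
      exact Subtype.ext (conj_eq (u r) j (T q) h4)
    -- conjugation homomorphism on A
    have cjmem : ∀ (h : G) (a : A), h * (a : G) * h⁻¹ ∈ A := fun h a =>
      Subgroup.Normal.conj_mem ‹A.Normal› _ a.2 h
    let cj : G → (A →* A) := fun h =>
      { toFun := fun a => ⟨h * (a : G) * h⁻¹, cjmem h a⟩
        map_one' := by ext; simp
        map_mul' := by
          intro a b
          ext
          simp only [Subgroup.coe_mul]
          group }
    set zA : A := ∏ q : P, f q with hzAdef
    have hcent : ∀ h : G, h * (zA : G) = (zA : G) * h := by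
      intro h
      have h1 : cj h zA = zA := by
        rw [hzAdef, map_prod]
        have h2 : ∀ q : P, cj h (f q) = f ((QuotientGroup.mk h : P) * q) := by
          intro q
          apply Subtype.ext
          have h3 : (QuotientGroup.mk (h * T q) : P)
              = QuotientGroup.mk (T ((QuotientGroup.mk h : P) * q)) := by
            rw [QuotientGroup.mk_mul, hT, hT]
          have h4 := congr_conj _ _ h3
          show h * (T q * g ^ m * (T q)⁻¹) * h⁻¹ = T ((QuotientGroup.mk h : P) * q) * g ^ m
              * (T ((QuotientGroup.mk h : P) * q))⁻¹
          calc h * (T q * g ^ m * (T q)⁻¹) * h⁻¹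
              = (h * T q) * g ^ m * (h * T q)⁻¹ := by group
            _ = _ := h4
        rw [Finset.prod_congr rfl (fun q _ => h2 q)]
        exact Fintype.prod_equiv (Equiv.mulLeft (QuotientGroup.mk h : P)) _ _ (fun q => rfl)
      have h5 : h * (zA : G) * h⁻¹ = (zA : G) := congrArg Subtype.val h1
      exact mul_inv_eq_iff_eq_mul.mp h5
    have hzA1 : zA = 1 := Subtype.ext (key (zA : G) zA.2 hcent)
    -- fiber counting
    have hfibcard : ∀ r : P ⧸ H,
        (Finset.univ.filter fun q : P => (QuotientGroup.mk q : P ⧸ H) = r).card = m := by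
      intro r
      have hc1 : (Finset.univ.filter fun q : P => (QuotientGroup.mk q : P ⧸ H) = r).card
          = (Finset.univ : Finset H).card := by
        refine Finset.card_bij'
          (fun q hq => (⟨(Quotient.out r)⁻¹ * q, ?_⟩ : H))
          (fun (h : H) _ => Quotient.out r * (h : P))
          (fun a ha => Finset.mem_univ _) ?_ ?_ ?_
        · refine (QuotientGroup.eq (s := H)).mp ?_
          rw [QuotientGroup.out_eq']
          exact ((Finset.mem_filter.mp hq).2).symm
        · intro h _
          rw [Finset.mem_filter]
          refine ⟨Finset.mem_univ _, ?_⟩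
          rw [QuotientGroup.mk_mul_of_mem _ h.2, QuotientGroup.out_eq']
        · intro q hq
          exact mul_inv_cancel_left _ _
        · intro h _
          exact Subtype.ext (inv_mul_cancel_left _ _)
      rw [hc1, Finset.card_univ, ← Nat.card_eq_fintype_card, hH, Nat.card_zpowers]
    -- product splits along fibers
    have hprodsplit : zA = (∏ r : P ⧸ H, w r) ^ m := by
      rw [hzAdef, ← Finset.prod_pow,
        ← Finset.prod_fiberwise_of_maps_to
          (g := fun q : P => (QuotientGroup.mk q : P ⧸ H)) (fun q _ => Finset.mem_univ _) f]
      refine Finset.prod_congr rfl fun r _ => ?_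
      rw [Finset.prod_congr rfl (fun q hq => ?_), Finset.prod_const, hfibcard r]
      rw [hfw q, (Finset.mem_filter.mp hq).2]
    have hm1 : (∏ r : P ⧸ H, w r) ^ m = 1 := by rw [← hprodsplit]; exact hzA1
    have hw1 : (∏ r : P ⧸ H, w r) = 1 := by
      apply eqv.injective
      rw [map_one]
      exact aux_tf hmpos _ (by rw [← map_pow, hm1, map_one])
    -- assemble the list
    refine ⟨(Finset.univ : Finset (P ⧸ H)).toList.flatMap fun r => List.replicate m (u r)⁻¹,
      ?_, ?_⟩
    · simp only [List.length_flatMap, Function.comp_def, List.length_replicate]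
      rw [List.map_const', List.sum_replicate, smul_eq_mul, Finset.length_toList,
        Finset.card_univ]
      have hcard : Nat.card P = Nat.card (P ⧸ H) * Nat.card H :=
        Subgroup.card_eq_card_quotient_mul_card_subgroup H
      have hidx : A.index = Nat.card P := rfl
      rw [hidx, hcard, Nat.card_eq_fintype_card (α := P ⧸ H)]
      congr 1
      exact (Nat.card_zpowers _).symm
    · have hmap : (((Finset.univ : Finset (P ⧸ H)).toList.flatMap
            fun r => List.replicate m (u r)⁻¹).map fun x => x⁻¹ * g * x)
          = (Finset.univ : Finset (P ⧸ H)).toList.flatMap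
            (fun r => List.replicate m (u r * g * (u r)⁻¹)) := by
        rw [List.map_flatMap]
        congr 1
        funext r
        rw [List.map_replicate]
        congr 1
        group
      rw [hmap, List.flatMap_def, List.prod_flatten, List.map_map]
      have h3 : (List.prod ∘ fun r : P ⧸ H => List.replicate m (u r * g * (u r)⁻¹))
          = fun r : P ⧸ H => ((w r : G)) := by
        funext r
        simp only [Function.comp_apply, List.prod_replicate]
        rw [conj_pow]
      have h4 : (fun r : P ⧸ H => ((w r : G))) = (A.subtype ∘ w) := rfl
      rw [h3, h4, ← List.map_map, ← map_list_prod A.subtype, Finset.prod_map_toList, hw1, map_one]
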